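/- Let C be a code over F_q with minimum b-symbol distance d and let C_H be its concatenation with the q-ary simplex code of dimension b. If B_j^H(C_H) denotes the Hamming distance distribution of C_H and B_i^b(C) the b-symbol distance distribution of C, then B_j^H(C_H) = B_i^b(C) when j = i·q^{b-1} for some 0 ≤ i ≤ n, and B_j^H(C_H) = 0 otherwise. -/

import Mathlib

open Finset

/-- Cyclic coordinate access: `cget z k` is the coordinate `z_k`, indices taken mod `n`. -/
def cget {Fq : Type*} [Zero Fq] {n : ℕ} (y : Fin n → Fq) (k : ℕ) : Fq :=
  if h : n = 0 then 0 else y ⟨k % n, Nat.mod_lt k (Nat.pos_of_ne_zero h)⟩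

/-- The `b`-symbol weight of a vector `y ∈ Fq^n`. -/
def wtb {Fq : Type*} [Zero Fq] [DecidableEq Fq] {n : ℕ} (b : ℕ) (y : Fin n → Fq) : ℕ :=
  ((Finset.range n).filter fun i => ∃ j : Fin b, cget y (i + j) ≠ 0).card

/-- The `b`-symbol distance on `Fq^n`. -/
def db {Fq : Type*} [Field Fq] [DecidableEq Fq] {n : ℕ} (b : ℕ) (x y : Fin n → Fq) : ℕ :=
  wtb b (x - y)

section Aux
variable {Fq : Type*} [Field Fq] [Fintype Fq] [DecidableEq Fq] {n b N : ℕ}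

omit [Fintype Fq] [DecidableEq Fq] in
lemma cget_sub (hn : 0 < n) (u v : Fin n → Fq) (k : ℕ) :
    cget (u - v) k = cget u k - cget v k := by
  simp [cget, hn.ne']

lemma hamming_psi (hn : 0 < n) (G : Fin b → Fin N → Fq)
    (hwt : ∀ x : Fin b → Fq, x ≠ 0 →
      hammingNorm (fun j : Fin N => ∑ i : Fin b, x i * G i j) = Fintype.card Fq ^ (b - 1))
    (u v : Fin n → Fq) :
    hammingDist (fun p : Fin n × Fin N => ∑ t : Fin b, cget u ((p.1 : ℕ) + t) * G t p.2)
      (fun p : Fin n × Fin N => ∑ t : Fin b, cget v ((p.1 : ℕ) + t) * G t p.2)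
      = db b u v * Fintype.card Fq ^ (b - 1) := by
  classical
  rw [hammingDist]
  rw [Finset.card_filter, Fintype.sum_prod_type]
  have step : ∀ i : Fin n,
      (∑ j : Fin N, if (∑ t : Fin b, cget u ((i : ℕ) + t) * G t j) ≠
          (∑ t : Fin b, cget v ((i : ℕ) + t) * G t j) then 1 else 0)
      = if (∃ t : Fin b, cget (u - v) ((i : ℕ) + t) ≠ 0) then Fintype.card Fq ^ (b - 1) else 0 := by
    intro i
    have hcond : ∀ j : Fin N,
        ((∑ t : Fin b, cget u ((i : ℕ) + t) * G t j) ≠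
          (∑ t : Fin b, cget v ((i : ℕ) + t) * G t j))
        ↔ (∑ t : Fin b, cget (u - v) ((i : ℕ) + t) * G t j) ≠ 0 := by
      intro j
      rw [← sub_ne_zero, ← Finset.sum_sub_distrib]
      simp [cget_sub hn, sub_mul]
    by_cases hx : ∃ t : Fin b, cget (u - v) ((i : ℕ) + t) ≠ 0
    · rw [if_pos hx]
      have hne : (fun t : Fin b => cget (u - v) ((i : ℕ) + t)) ≠ 0 := by
        obtain ⟨t, ht⟩ := hx
        intro h; exact ht (congrFun h t)
      have := hwt _ hne
      rw [← this, hammingNorm, Finset.card_filter]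
      exact Finset.sum_congr rfl fun j _ => by rw [if_congr (hcond j) rfl rfl]
    · rw [if_neg hx]
      push_neg at hx
      refine Finset.sum_eq_zero fun j _ => ?_
      rw [if_neg]
      rw [hcond j]
      push_neg
      exact Finset.sum_eq_zero fun t _ => by rw [hx t, zero_mul]
  rw [Finset.sum_congr rfl fun i _ => step i]
  rw [Fin.sum_univ_eq_sum_range
    (fun i => if (∃ t : Fin b, cget (u - v) (i + t) ≠ 0) then Fintype.card Fq ^ (b - 1) else 0)]
  rw [db, wtb, Finset.card_filter, Finset.sum_mul]
  exact Finset.sum_congr rfl fun i _ => by split <;> simp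

omit [Fintype Fq] in
lemma wtb_pos (hn : 0 < n) {w : Fin n → Fq} (hb : 1 ≤ b) (hw : w ≠ 0) : wtb b w ≠ 0 := by
  rw [wtb, Finset.card_ne_zero]
  obtain ⟨k, hk⟩ : ∃ k : Fin n, w k ≠ 0 := by
    by_contra h; push_neg at h; exact hw (funext h)
  refine ⟨(k : ℕ), Finset.mem_filter.mpr ⟨Finset.mem_range.mpr k.2, ⟨⟨0, hb⟩, ?_⟩⟩⟩
  simpa [cget, hn.ne', Nat.mod_eq_of_lt k.2] using hk

omit [Fintype Fq] in
lemma wtb_le (w : Fin n → Fq) : wtb b w ≤ n := by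
  simpa [wtb] using (Finset.card_filter_le (Finset.range n) _)

end Aux

/-- Lemma 5.4: if `C_H` is the concatenation of `C` with the `q`-ary simplex code of
dimension `b` (generator matrix `G`, with `Φ(x) = x·G` injective, linear, of constant
nonzero weight `q^{b-1}`), then the Hamming distance distribution of `C_H` satisfies
`B^H_{i·q^{b-1}}(C_H) = B^b_i(C)` for `0 ≤ i ≤ n`, and `B^H_j(C_H) = 0` whenever `j` is
not of the form `i·q^{b-1}` with `0 ≤ i ≤ n`. -/
theorem distance_distribution_concat {Fq : Type*} [Field Fq] [Fintype Fq] [DecidableEq Fq]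
    {n b d N : ℕ} (hb1 : 1 ≤ b) (hbn : b ≤ n)
    (hN : N = (Fintype.card Fq ^ b - 1) / (Fintype.card Fq - 1))
    (G : Fin b → Fin N → Fq)
    (hinj : Function.Injective fun x : Fin b → Fq => fun j : Fin N => ∑ i : Fin b, x i * G i j)
    (hwt : ∀ x : Fin b → Fq, x ≠ 0 →
      hammingNorm (fun j : Fin N => ∑ i : Fin b, x i * G i j) = Fintype.card Fq ^ (b - 1))
    (C : Finset (Fin n → Fq)) (hC : C.Nonempty)
    (hmin : ∀ x ∈ C, ∀ y ∈ C, x ≠ y → d ≤ db b x y)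
    (hex : ∃ x ∈ C, ∃ y ∈ C, x ≠ y ∧ db b x y = d) :
    (∀ i : ℕ, i ≤ n →
      ((((C.image fun c : Fin n → Fq => fun p : Fin n × Fin N =>
            ∑ t : Fin b, cget c ((p.1 : ℕ) + t) * G t p.2) ×ˢ
          (C.image fun c : Fin n → Fq => fun p : Fin n × Fin N =>
            ∑ t : Fin b, cget c ((p.1 : ℕ) + t) * G t p.2)).filter fun uv =>
              hammingDist uv.1 uv.2 = i * Fintype.card Fq ^ (b - 1)).card : ℝ) /
          ((C.image fun c : Fin n → Fq => fun p : Fin n × Fin N =>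
            ∑ t : Fin b, cget c ((p.1 : ℕ) + t) * G t p.2).card : ℝ)
        = (((C ×ˢ C).filter fun uv => db b uv.1 uv.2 = i).card : ℝ) / (C.card : ℝ)) ∧
    (∀ j : ℕ, (¬ ∃ i : ℕ, i ≤ n ∧ j = i * Fintype.card Fq ^ (b - 1)) →
      ((((C.image fun c : Fin n → Fq => fun p : Fin n × Fin N =>
            ∑ t : Fin b, cget c ((p.1 : ℕ) + t) * G t p.2) ×ˢ
          (C.image fun c : Fin n → Fq => fun p : Fin n × Fin N =>
            ∑ t : Fin b, cget c ((p.1 : ℕ) + t) * G t p.2)).filter fun uv =>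
              hammingDist uv.1 uv.2 = j).card : ℝ) /
          ((C.image fun c : Fin n → Fq => fun p : Fin n × Fin N =>
            ∑ t : Fin b, cget c ((p.1 : ℕ) + t) * G t p.2).card : ℝ) = 0) := by
  classical
  have hn : 0 < n := lt_of_lt_of_le hb1 hbn
  set ψ : (Fin n → Fq) → (Fin n × Fin N → Fq) :=
    fun c => fun p : Fin n × Fin N => ∑ t : Fin b, cget c ((p.1 : ℕ) + t) * G t p.2 with hψ
  have hq : 0 < Fintype.card Fq ^ (b - 1) := pow_pos Fintype.card_pos _
  have key : ∀ u v : Fin n → Fq,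
      hammingDist (ψ u) (ψ v) = db b u v * Fintype.card Fq ^ (b - 1) :=
    fun u v => hamming_psi hn G hwt u v
  have hinjψ : Function.Injective ψ := by
    intro u v h
    by_contra hne
    have h0 : hammingDist (ψ u) (ψ v) = 0 := by rw [h, hammingDist_self]
    rw [key] at h0
    rcases Nat.mul_eq_zero.mp h0 with h1 | h1
    · exact wtb_pos hn hb1 (sub_ne_zero.mpr hne) h1
    · exact hq.ne' h1
  have hprod : (C.image ψ) ×ˢ (C.image ψ) = (C ×ˢ C).image (Prod.map ψ ψ) := by
    ext p
    simp only [Finset.mem_product, Finset.mem_image, Prod.ext_iff, Prod.map]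
    constructor
    · rintro ⟨⟨u, hu, h1⟩, ⟨v, hv, h2⟩⟩
      exact ⟨(u, v), ⟨hu, hv⟩, h1, h2⟩
    · rintro ⟨⟨u, v⟩, ⟨hu, hv⟩, h1, h2⟩
      exact ⟨⟨u, hu, h1⟩, ⟨v, hv, h2⟩⟩
  have hcard : ∀ (P : (Fin n × Fin N → Fq) × (Fin n × Fin N → Fq) → Prop) [DecidablePred P],
      (((C.image ψ) ×ˢ (C.image ψ)).filter P).card
        = ((C ×ˢ C).filter fun uv => P (ψ uv.1, ψ uv.2)).card := by
    intro P _
    rw [hprod, Finset.filter_image, Finset.card_image_of_injective _ (hinjψ.prodMap hinjψ)]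
    have hfe : (Finset.filter (fun a => P (Prod.map ψ ψ a)) (C ×ˢ C))
        = Finset.filter (fun uv => P (ψ uv.1, ψ uv.2)) (C ×ˢ C) :=
      Finset.filter_congr fun uv _ => by obtain ⟨u, v⟩ := uv; simp [Prod.map]
    rw [hfe]
  have hden : (C.image ψ).card = C.card := Finset.card_image_of_injective _ hinjψ
  constructor
  · intro i _
    have heq : ((C ×ˢ C).filter fun uv =>
          hammingDist (ψ uv.1, ψ uv.2).1 (ψ uv.1, ψ uv.2).2 = i * Fintype.card Fq ^ (b - 1))
        = (C ×ˢ C).filter fun uv => db b uv.1 uv.2 = i := by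
      refine Finset.filter_congr fun uv _ => ?_
      simp only [key]
      exact ⟨fun h => Nat.eq_of_mul_eq_mul_right hq h, fun h => by rw [h]⟩
    rw [hcard, heq, hden]
  · intro j hj
    rw [hcard]
    have : ((C ×ˢ C).filter fun uv =>
          hammingDist (ψ uv.1, ψ uv.2).1 (ψ uv.1, ψ uv.2).2 = j) = ∅ := by
      refine Finset.filter_eq_empty_iff.mpr fun uv _ => ?_
      simp only [key]
      intro h
      exact hj ⟨db b uv.1 uv.2, wtb_le _, h.symm⟩
    rw [this]
    simp
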